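/- Let Γ be a connected, locally finite graph and G a group acting on Γ by automorphisms, properly discontinuously and cocompactly (finitely many orbits of vertices). Then G is finitely generated and, for any choice of base vertex v₀, the orbit map g ↦ g·v₀ is a quasi-isometry from G (with a word metric for some finite generating set) to Γ with its path metric. -/

import Mathlib

/-- The Cayley graph of a group with respect to a finite set `S` of generators
(symmetrised); its path metric is the word metric. -/
def cayleyGraph (G : Type*) [Group G] (S : Finset G) : SimpleGraph G where
  Adj g h := g ≠ h ∧ (g⁻¹ * h ∈ S ∨ h⁻¹ * g ∈ S)
  symm := by
    constructor
    rintro g h ⟨hne, hs⟩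
    exact ⟨hne.symm, hs.symm⟩
  loopless := by
    constructor
    rintro g ⟨hne, -⟩
    exact hne rfl

/-- Švarc–Milnor for graphs: if a group `G` acts by automorphisms on a
connected locally finite graph `Γ`, properly discontinuously and with finitely many
vertex orbits, then `G` is finitely generated, and for every base vertex `v₀` the
orbit map `g ↦ g • v₀` is a quasi-isometry from a word metric of `G` to `Γ`. -/
theorem stmt_8 {V : Type*} (Γ : SimpleGraph V) (hconn : Γ.Connected)
    (hlf : Γ.LocallyFinite)
    (G : Type*) [Group G] [MulAction G V]
    (hact : ∀ (g : G) (u v : V), Γ.Adj u v → Γ.Adj (g • u) (g • v))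
    (hpd : ∀ (v : V) (r : ℕ), {g : G | Γ.dist v (g • v) ≤ r}.Finite)
    (hcocompact : Finite (Quotient (MulAction.orbitRel G V))) :
    ∃ S : Finset G, Subgroup.closure (S : Set G) = ⊤ ∧
      ∀ v₀ : V, ∃ l e : ℝ, 1 ≤ l ∧ 0 ≤ e ∧
        (∀ g h : G,
          (1 / l) * ((cayleyGraph G S).dist g h : ℝ) - e ≤ (Γ.dist (g • v₀) (h • v₀) : ℝ) ∧
          (Γ.dist (g • v₀) (h • v₀) : ℝ) ≤ l * ((cayleyGraph G S).dist g h : ℝ) + e) ∧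
        (∀ v : V, ∃ g : G, (Γ.dist v (g • v₀) : ℝ) ≤ e) := by
  classical
  -- the action is by isometries
  have hdist_le : ∀ (g : G) (u v : V), Γ.dist (g • u) (g • v) ≤ Γ.dist u v := by
    intro g u v
    obtain ⟨p, hp⟩ := hconn.exists_walk_length_eq_dist u v
    have := SimpleGraph.dist_le
      (p.map (⟨fun x => g • x, fun h => hact g _ _ h⟩ : Γ →g Γ))
    simpa [hp] using this
  have hdist_smul : ∀ (g : G) (u v : V), Γ.dist (g • u) (g • v) = Γ.dist u v := by
    intro g u v
    refine le_antisymm (hdist_le g u v) ?_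
    have := hdist_le g⁻¹ (g • u) (g • v)
    simpa using this
  -- base point
  obtain ⟨b⟩ := hconn.nonempty
  -- density constant
  haveI : Fintype (Quotient (MulAction.orbitRel G V)) := Fintype.ofFinite _
  have hDex : ∃ D : ℕ, ∀ v : V, ∃ g : G, Γ.dist v (g • b) ≤ D := by
    refine ⟨Finset.univ.sup (fun q : Quotient (MulAction.orbitRel G V) => Γ.dist q.out b), ?_⟩
    intro v
    have h1 : (MulAction.orbitRel G V) (Quotient.mk (MulAction.orbitRel G V) v).out v :=
      Quotient.mk_out v
    obtain ⟨g, hg⟩ := (MulAction.orbitRel G V).iseqv.symm h1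
    have hg' : g • (Quotient.mk (MulAction.orbitRel G V) v).out = v := hg
    refine ⟨g, ?_⟩
    have h2 : Γ.dist v (g • b) = Γ.dist (Quotient.mk (MulAction.orbitRel G V) v).out b := by
      conv_lhs => rw [← hg']
      exact hdist_smul g _ _
    rw [h2]
    exact Finset.le_sup (f := fun q : Quotient (MulAction.orbitRel G V) => Γ.dist q.out b)
      (Finset.mem_univ (Quotient.mk (MulAction.orbitRel G V) v))
  obtain ⟨D, hD⟩ := hDex
  -- generating set
  set S : Finset G := (hpd b (2 * D + 1)).toFinset with hSdef
  have hS : ∀ g : G, g ∈ S ↔ Γ.dist b (g • b) ≤ 2 * D + 1 := by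
    intro g; simp [hSdef, Set.Finite.mem_toFinset]
  have hdb : ∀ g h : G, Γ.dist (g • b) (h • b) = Γ.dist b ((g⁻¹ * h) • b) := by
    intro g h
    rw [← hdist_smul g b ((g⁻¹ * h) • b), smul_smul, mul_inv_cancel_left]
  -- elements moving b close to each other give generators
  have hmem : ∀ g h : G, Γ.dist (g • b) (h • b) ≤ 2 * D + 1 → g⁻¹ * h ∈ S := by
    intro g h hle
    rw [hS]
    rw [hdb] at hle
    exact hle
  -- key walk construction
  have key : ∀ (u w : V) (p : Γ.Walk u w) (gu gw : G),
      Γ.dist u (gu • b) ≤ D → Γ.dist w (gw • b) ≤ D →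
      ∃ q : (cayleyGraph G S).Walk gu gw, q.length ≤ p.length + 1 := by
    intro u w p
    induction p with
    | @nil z =>
      intro gu gw h1 h2
      by_cases hgeq : gu = gw
      · subst hgeq; exact ⟨SimpleGraph.Walk.nil, by simp⟩
      · have hd : Γ.dist (gu • b) (gw • b) ≤ 2 * D + 1 := by
          calc Γ.dist (gu • b) (gw • b) ≤ Γ.dist (gu • b) z + Γ.dist z (gw • b) :=
                hconn.dist_triangle
            _ ≤ D + D := by
                rw [SimpleGraph.dist_comm (u := gu • b)]; exact Nat.add_le_add h1 h2
            _ ≤ 2 * D + 1 := by omega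
        refine ⟨SimpleGraph.Walk.cons ⟨hgeq, Or.inl (hmem _ _ hd)⟩ SimpleGraph.Walk.nil, by exact Nat.le_refl _⟩
    | @cons u x w ha p ih =>
      intro gu gw h1 h2
      obtain ⟨gx, hgx⟩ := hD x
      obtain ⟨q, hq⟩ := ih gx gw hgx h2
      have hd : Γ.dist (gu • b) (gx • b) ≤ 2 * D + 1 := by
        calc Γ.dist (gu • b) (gx • b)
            ≤ Γ.dist (gu • b) u + Γ.dist u (gx • b) := hconn.dist_triangle
          _ ≤ D + (Γ.dist u x + Γ.dist x (gx • b)) := by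
              rw [SimpleGraph.dist_comm (u := gu • b)]
              exact Nat.add_le_add h1 hconn.dist_triangle
          _ ≤ D + (1 + D) := by
              have : Γ.dist u x = 1 := SimpleGraph.dist_eq_one_iff_adj.mpr ha
              omega
          _ ≤ 2 * D + 1 := by omega
      by_cases hgeq : gu = gx
      · subst hgeq
        exact ⟨q, by simpa using Nat.le_succ_of_le hq⟩
      · refine ⟨SimpleGraph.Walk.cons ⟨hgeq, Or.inl (hmem _ _ hd)⟩ q, ?_⟩
        exact Nat.succ_le_succ hq
  -- upper bound: cayley walks from orbit distance
  have upper : ∀ g h : G, ∃ q : (cayleyGraph G S).Walk g h,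
      q.length ≤ Γ.dist (g • b) (h • b) + 1 := by
    intro g h
    obtain ⟨p, hp⟩ := hconn.exists_walk_length_eq_dist (g • b) (h • b)
    obtain ⟨q, hq⟩ := key _ _ p g h (by simp [SimpleGraph.dist_self]) (by simp [SimpleGraph.dist_self])
    exact ⟨q, by omega⟩
  haveI : Nonempty G := ⟨1⟩
  have hcayconn : (cayleyGraph G S).Connected := by
    constructor
    intro g h
    exact ⟨(upper g h).choose⟩
  -- lower bound
  have lower : ∀ (g h : G) (q : (cayleyGraph G S).Walk g h),
      Γ.dist (g • b) (h • b) ≤ (2 * D + 1) * q.length := by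
    intro g h q
    induction q with
    | nil => simp
    | @cons g x h ha q ih =>
      have hd : Γ.dist (g • b) (x • b) ≤ 2 * D + 1 := by
        rcases ha with ⟨-, hs | hs⟩
        · rw [hdb]; exact (hS _).mp hs
        · rw [SimpleGraph.dist_comm, hdb]; exact (hS _).mp hs
      calc Γ.dist (g • b) (h • b)
          ≤ Γ.dist (g • b) (x • b) + Γ.dist (x • b) (h • b) := hconn.dist_triangle
        _ ≤ (2 * D + 1) + (2 * D + 1) * q.length := Nat.add_le_add hd ih
        _ = (2 * D + 1) * (SimpleGraph.Walk.cons ha q).length := by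
            rw [SimpleGraph.Walk.length_cons]; ring
  -- generation
  have hgen : Subgroup.closure (S : Set G) = ⊤ := by
    rw [eq_top_iff]
    intro g _
    obtain ⟨q, -⟩ := upper 1 g
    have step : ∀ (x y : G) (q : (cayleyGraph G S).Walk x y),
        x ∈ Subgroup.closure (S : Set G) → y ∈ Subgroup.closure (S : Set G) := by
      intro x y q
      induction q with
      | nil => exact id
      | @cons x z y ha q ih =>
        intro hx
        apply ih
        rcases ha with ⟨-, hs | hs⟩
        · have := Subgroup.mul_mem _ hx (Subgroup.subset_closure hs)
          simpa [mul_inv_cancel_left] using this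
        · have := Subgroup.mul_mem _ hx
            (Subgroup.inv_mem _ (Subgroup.subset_closure hs))
          simpa [mul_inv_rev, mul_inv_cancel_left] using this
    exact step 1 g q (Subgroup.one_mem _)
  refine ⟨S, hgen, ?_⟩
  intro v₀
  set c : ℕ := Γ.dist b v₀ with hc
  have hD0 : (0:ℝ) ≤ (D:ℝ) := Nat.cast_nonneg _
  have hc0 : (0:ℝ) ≤ (c:ℝ) := Nat.cast_nonneg _
  refine ⟨(2 * D + 1 : ℝ), (2 * c + D + 1 : ℝ), by linarith, by linarith, ?_, ?_⟩
  · intro g h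
    have hgb : Γ.dist (g • b) (g • v₀) = c := hdist_smul g b v₀
    have hhb : Γ.dist (h • b) (h • v₀) = c := hdist_smul h b v₀
    -- nat inequality 1 : cayley dist ≤ dΓ + 2c + 1
    have n1 : (cayleyGraph G S).dist g h ≤ Γ.dist (g • v₀) (h • v₀) + 2 * c + 1 := by
      obtain ⟨q, hq⟩ := upper g h
      have h1 : (cayleyGraph G S).dist g h ≤ Γ.dist (g • b) (h • b) + 1 :=
        le_trans (SimpleGraph.dist_le q) hq
      have h2 : Γ.dist (g • b) (h • b)
          ≤ c + (Γ.dist (g • v₀) (h • v₀) + c) := by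
        calc Γ.dist (g • b) (h • b)
            ≤ Γ.dist (g • b) (g • v₀) + Γ.dist (g • v₀) (h • b) := hconn.dist_triangle
          _ ≤ c + (Γ.dist (g • v₀) (h • v₀) + Γ.dist (h • v₀) (h • b)) := by
              rw [hgb]; exact Nat.add_le_add_left hconn.dist_triangle _
          _ = c + (Γ.dist (g • v₀) (h • v₀) + c) := by
              rw [SimpleGraph.dist_comm (u := h • v₀), hhb]
      omega
    -- nat inequality 2 : dΓ ≤ (2D+1) * cayley dist + 2c
    have n2 : Γ.dist (g • v₀) (h • v₀)
        ≤ (2 * D + 1) * (cayleyGraph G S).dist g h + 2 * c := by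
      obtain ⟨q, hq⟩ := hcayconn.exists_walk_length_eq_dist g h
      have h1 : Γ.dist (g • b) (h • b) ≤ (2 * D + 1) * (cayleyGraph G S).dist g h := by
        have := lower g h q
        rw [hq] at this
        exact this
      calc Γ.dist (g • v₀) (h • v₀)
          ≤ Γ.dist (g • v₀) (g • b) + Γ.dist (g • b) (h • v₀) := hconn.dist_triangle
        _ ≤ c + (Γ.dist (g • b) (h • b) + Γ.dist (h • b) (h • v₀)) := by
            rw [SimpleGraph.dist_comm (u := g • v₀), hgb]
            exact Nat.add_le_add_left hconn.dist_triangle _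
        _ ≤ c + ((2 * D + 1) * (cayleyGraph G S).dist g h + c) := by
            rw [hhb]; omega
        _ = (2 * D + 1) * (cayleyGraph G S).dist g h + 2 * c := by ring
    constructor
    · have hl : (1 : ℝ) ≤ (2 * D + 1 : ℝ) := by linarith
      have hmono : (1 / (2 * D + 1 : ℝ)) * ((cayleyGraph G S).dist g h : ℝ)
          ≤ ((cayleyGraph G S).dist g h : ℝ) := by
        have h0 : (0:ℝ) ≤ ((cayleyGraph G S).dist g h : ℝ) := Nat.cast_nonneg _
        have : (1 / (2 * D + 1 : ℝ)) ≤ 1 := by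
          rw [div_le_one (by positivity)]; exact hl
        nlinarith
      have n1' : ((cayleyGraph G S).dist g h : ℝ)
          ≤ (Γ.dist (g • v₀) (h • v₀) : ℝ) + 2 * c + 1 := by exact_mod_cast n1
      linarith
    · have n2' : (Γ.dist (g • v₀) (h • v₀) : ℝ)
        ≤ (2 * D + 1 : ℝ) * ((cayleyGraph G S).dist g h : ℝ) + 2 * c := by
        exact_mod_cast n2
      linarith
  · intro v
    obtain ⟨g, hg⟩ := hD v
    refine ⟨g, ?_⟩
    have : Γ.dist v (g • v₀) ≤ D + c := by
      calc Γ.dist v (g • v₀) ≤ Γ.dist v (g • b) + Γ.dist (g • b) (g • v₀) := hconn.dist_triangle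
        _ ≤ D + c := by rw [hdist_smul g b v₀]; omega
    have : (Γ.dist v (g • v₀) : ℝ) ≤ (D : ℝ) + c := by exact_mod_cast this
    linarith
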